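/- Let S be a Polish space with a fixed complete metric, U a standard Borel space, and ν a kernel from ℝ to S such that for every x ∈ ℝ the measure ν_x has full topological support S. Let μ and μ_1, μ_2, … be bounded kernels from S × ℝ to U such that each μ_n is continuous in total variation on S × G_n for some open set G_n ⊆ ℝ (i.e. (s,x) ↦ μ_{n,(s,x)} is continuous with respect to the total variation norm on that set). Suppose h_n : S × ℝ → [0,∞) are measurable functions with h_n → 0 uniformly on bounded subsets of S × ℝ, and suppose that for every n and every x ∈ ℝ, ν_x({s ∈ S : ‖μ_{(s,x)} − μ_{n,(s,x)}‖ > h_n(s,x)}) = 0. Then there exists a bounded kernel μ′ from S × ℝ to U such that: (a) for every x ∈ ℝ, μ_{(s,x)} = μ′_{(s,x)} for ν_x-almost every s ∈ S; and (b) (s,x) ↦ μ′_{(s,x)} is continuous in total variation on S × limsup_n G_n, where limsup_n G_n = ⋂_n ⋃_{k≥n} G_k. -/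

import Mathlib

open MeasureTheory ProbabilityTheory Filter Topology
open scoped ENNReal

/-- The total variation distance between two (finite) measures, via the Jordan decomposition:
`‖α − β‖ = (α − β)(univ) + (β − α)(univ)`, where `−` is truncated subtraction of measures. -/
noncomputable def tvDist {T : Type*} [MeasurableSpace T] (α β : Measure T) : ℝ≥0∞ :=
  (α - β) Set.univ + (β - α) Set.univ

namespace TVAux

variable {T : Type*} [MeasurableSpace T]

/-- Hahn-based description of the subtraction of finite measures. -/
theorem sub_eq_restrict_sub (α β : Measure T) [IsFiniteMeasure α] [IsFiniteMeasure β] :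
    ∃ s : Set T, MeasurableSet s ∧ β.restrict s ≤ α.restrict s ∧
      α - β = α.restrict s - β.restrict s ∧ α ≤ (α - β) + β := by
  obtain ⟨s, hs, h1, h2⟩ := hahn_decomposition (μ := α) (ν := β)
  have hres : β.restrict s ≤ α.restrict s := by
    refine Measure.le_iff.2 fun A hA => ?_
    rw [Measure.restrict_apply hA, Measure.restrict_apply hA]
    exact h1 _ (hA.inter hs) Set.inter_subset_right
  set γ : Measure T := α.restrict s - β.restrict s with hγ
  have hγapp : ∀ A : Set T, MeasurableSet A → γ A = α (A ∩ s) - β (A ∩ s) := by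
    intro A hA
    rw [hγ, Measure.sub_apply hA hres, Measure.restrict_apply hA, Measure.restrict_apply hA]
  have hle : α ≤ γ + β := by
    refine Measure.le_iff.2 fun A hA => ?_
    have hsplit : α A = α (A ∩ s) + α (A \ s) := (measure_inter_add_diff A hs).symm
    have h2' : α (A \ s) ≤ β (A \ s) := h2 _ (hA.diff hs) (by intro x hx; exact hx.2)
    have hβsplit : β A = β (A ∩ s) + β (A \ s) := (measure_inter_add_diff A hs).symm
    have : γ A + β A = α (A ∩ s) + β (A \ s) := by
      rw [hγapp A hA, hβsplit, ← add_assoc,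
        tsub_add_cancel_of_le (h1 _ (hA.inter hs) Set.inter_subset_right)]
    rw [Measure.add_apply, this, hsplit]
    exact add_le_add_right h2' _
  have hγle : γ ≤ α - β := by
    refine le_sInf fun d hd => Measure.le_iff.2 fun A hA => ?_
    have hd' : α (A ∩ s) ≤ d (A ∩ s) + β (A ∩ s) := by
      have := Measure.le_iff.1 hd _ (hA.inter hs)
      simpa [Measure.add_apply] using this
    rw [hγapp A hA]
    calc α (A ∩ s) - β (A ∩ s) ≤ d (A ∩ s) := tsub_le_iff_right.2 hd'
      _ ≤ d A := measure_mono Set.inter_subset_left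
  have heq : α - β = γ := le_antisymm (Measure.sub_le_of_le_add hle) hγle
  exact ⟨s, hs, hres, heq, heq ▸ hle⟩

theorem le_sub_add (α β : Measure T) [IsFiniteMeasure α] [IsFiniteMeasure β] :
    α ≤ (α - β) + β :=
  (sub_eq_restrict_sub α β).choose_spec.2.2.2

theorem sub_univ_eq (α β : Measure T) [IsFiniteMeasure α] [IsFiniteMeasure β] :
    ∃ s : Set T, MeasurableSet s ∧ (α - β) Set.univ = α s - β s := by
  obtain ⟨s, hs, hres, heq, -⟩ := sub_eq_restrict_sub α β
  refine ⟨s, hs, ?_⟩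
  rw [heq, Measure.sub_apply MeasurableSet.univ hres, Measure.restrict_apply MeasurableSet.univ,
    Measure.restrict_apply MeasurableSet.univ, Set.univ_inter]

theorem apply_le_add_tvDist (α β : Measure T) [IsFiniteMeasure α] [IsFiniteMeasure β]
    {A : Set T} (hA : MeasurableSet A) : α A ≤ β A + tvDist α β := by
  have h1 : α A ≤ (α - β) A + β A := by
    have := Measure.le_iff.1 (le_sub_add α β) A hA
    simpa [Measure.add_apply] using this
  have h2 : (α - β) A ≤ tvDist α β :=
    le_trans (measure_mono (Set.subset_univ A)) (le_add_right le_rfl)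
  calc α A ≤ (α - β) A + β A := h1
    _ ≤ tvDist α β + β A := add_le_add_left h2 _
    _ = β A + tvDist α β := add_comm _ _

theorem tvDist_comm (α β : Measure T) : tvDist α β = tvDist β α := add_comm _ _

theorem tvDist_triangle (α β γ : Measure T) [IsFiniteMeasure α] [IsFiniteMeasure β]
    [IsFiniteMeasure γ] : tvDist α γ ≤ tvDist α β + tvDist β γ := by
  have key : ∀ (a b c : Measure T) [IsFiniteMeasure a] [IsFiniteMeasure b]
      [IsFiniteMeasure c], (a - c) Set.univ ≤ (a - b) Set.univ + (b - c) Set.univ := by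
    intro a b c _ _ _
    have h1 : a ≤ ((a - b) + (b - c)) + c := by
      calc a ≤ (a - b) + b := le_sub_add a b
        _ ≤ (a - b) + ((b - c) + c) := add_le_add_right (le_sub_add b c) _
        _ = ((a - b) + (b - c)) + c := by rw [add_assoc]
    have h2 : a - c ≤ (a - b) + (b - c) := Measure.sub_le_of_le_add h1
    have := Measure.le_iff.1 h2 Set.univ MeasurableSet.univ
    simpa [Measure.add_apply] using this
  have H1 := key α β γ
  have H2 := key γ β α
  unfold tvDist
  calc (α - γ) Set.univ + (γ - α) Set.univ
      ≤ ((α - β) Set.univ + (β - γ) Set.univ) + ((γ - β) Set.univ + (β - α) Set.univ) :=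
        add_le_add H1 H2
    _ = ((α - β) Set.univ + (β - α) Set.univ) + ((β - γ) Set.univ + (γ - β) Set.univ) := by ring
    _ = tvDist α β + tvDist β γ := rfl

theorem tvDist_le_of_forall_apply (α β : Measure T) [IsFiniteMeasure α] [IsFiniteMeasure β]
    {c d : ℝ≥0∞} (h : ∀ A : Set T, MeasurableSet A → α A ≤ β A + c ∧ β A ≤ α A + d) :
    tvDist α β ≤ c + d := by
  obtain ⟨s, hs, hse⟩ := sub_univ_eq α β
  obtain ⟨t, ht, hte⟩ := sub_univ_eq β α
  have h1 : (α - β) Set.univ ≤ c := by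
    rw [hse]; exact tsub_le_iff_right.2 (by rw [add_comm]; exact (h s hs).1)
  have h2 : (β - α) Set.univ ≤ d := by
    rw [hte]; exact tsub_le_iff_right.2 (by rw [add_comm]; exact (h t ht).2)
  exact add_le_add h1 h2

theorem tvDist_self (α : Measure T) : tvDist α α = 0 := by
  unfold tvDist; rw [Measure.sub_self]; simp

end TVAux
namespace TVAux

/-- convergence criterion in `ℝ≥0∞` from two-sided `ε`-closeness. -/
theorem tendsto_of_eventually_close {ι : Type*} {l : Filter ι} [l.NeBot] {u : ι → ℝ≥0∞}
    {c : ℝ≥0∞} (hc : c ≠ ⊤)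
    (H : ∀ ε : ℝ≥0∞, ε ≠ 0 → ∀ᶠ n in l, u n ≤ c + ε ∧ c ≤ u n + ε) : Tendsto u l (𝓝 c) := by
  have hsup : limsup u l ≤ c := by
    refine ENNReal.le_of_forall_pos_le_add fun ε hε _ => ?_
    exact limsup_le_of_le (by isBoundedDefault)
      ((H ε (by exact_mod_cast hε.ne')).mono fun n hn => hn.1)
  have hinf : c ≤ liminf u l := by
    refine ENNReal.le_of_forall_pos_le_add fun ε hε _ => ?_
    have hε' : (ε : ℝ≥0∞) ≠ 0 := by exact_mod_cast hε.ne'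
    have : c - ε ≤ liminf u l :=
      le_liminf_of_le (by isBoundedDefault)
        ((H ε hε').mono fun n hn => tsub_le_iff_right.2 hn.2)
    exact tsub_le_iff_right.1 this
  have h1 : liminf u l = c := le_antisymm (le_trans liminf_le_limsup hsup) hinf
  have h2 : limsup u l = c := le_antisymm hsup (le_trans hinf liminf_le_limsup)
  exact tendsto_of_liminf_eq_limsup h1 h2

/-- If `u` tends to finite `c` along `atTop ⊓ 𝓟 J` with `J` cofinal, then the `limsup` of the
indicator extension is `c`. -/
theorem limsup_indicator_eq {J : Set ℕ} (hJ : ∀ a : ℕ, ∃ b ≥ a, b ∈ J) {u : ℕ → ℝ≥0∞}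
    {c : ℝ≥0∞} (hc : c ≠ ⊤) (hu : Tendsto u (atTop ⊓ 𝓟 J) (𝓝 c)) :
    limsup (J.indicator u) atTop = c := by
  have hNB : (atTop ⊓ 𝓟 J).NeBot := by
    rw [← frequently_mem_iff_neBot]
    exact frequently_atTop.2 hJ
  have hle : limsup (J.indicator u) atTop ≤ c := by
    refine ENNReal.le_of_forall_pos_le_add fun ε hε _ => ?_
    have hε' : (0:ℝ≥0∞) < ε := by exact_mod_cast hε
    have h1 : ∀ᶠ n in atTop ⊓ 𝓟 J, u n < c + ε :=
      hu.eventually_lt_const (ENNReal.lt_add_right hc hε'.ne')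
    rw [eventually_inf_principal] at h1
    refine limsup_le_of_le (by isBoundedDefault) (h1.mono fun n hn => ?_)
    by_cases hnJ : n ∈ J
    · simp only [Set.indicator_of_mem hnJ]; exact (hn hnJ).le
    · simp [Set.indicator_of_notMem hnJ]
  have hge : c ≤ limsup (J.indicator u) atTop := by
    refine ENNReal.le_of_forall_pos_le_add fun ε hε _ => ?_
    have hε' : (0:ℝ≥0∞) < ε := by exact_mod_cast hε
    rcases le_or_gt c ε with hce | hce
    · exact le_add_left hce
    · have hlt : c - ε < c := ENNReal.sub_lt_self hc (hε'.trans hce).ne' hε'.ne'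
      have h1 : ∀ᶠ n in atTop ⊓ 𝓟 J, c - ε < u n := hu.eventually_const_lt hlt
      have h2 : ∃ᶠ n in atTop, n ∈ J ∧ c - ε < u n :=
        Frequently.of_inf_principal h1.frequently
      have h3 : ∃ᶠ n in atTop, c - ε ≤ J.indicator u n :=
        h2.mono fun n hn => by rw [Set.indicator_of_mem hn.1]; exact hn.2.le
      exact tsub_le_iff_right.1 (le_limsup_of_frequently_le h3)
  exact le_antisymm hle hge

end TVAux
namespace TVAux

variable {U : Type*} [MeasurableSpace U]

theorem exists_limit_measure (ρ : ℕ → Measure U) [hfin : ∀ n, IsFiniteMeasure (ρ n)]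
    (J : Set ℕ) (hJ : ∀ a : ℕ, ∃ b ≥ a, b ∈ J)
    (hcauchy : ∀ ε : ℝ≥0∞, ε ≠ 0 → ∃ N, ∀ m ∈ J, ∀ n ∈ J, N ≤ m → N ≤ n →
      tvDist (ρ m) (ρ n) ≤ ε) :
    ∃ L : Measure U,
      (∀ A : Set U, MeasurableSet A →
        L A = limsup (J.indicator (fun n => ρ n A)) atTop) ∧
      (∀ A : Set U, MeasurableSet A →
        Tendsto (fun n => ρ n A) (atTop ⊓ 𝓟 J) (𝓝 (L A))) := by
  set l : Filter ℕ := atTop ⊓ 𝓟 J with hl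
  have hNB : l.NeBot := by
    rw [hl, ← frequently_mem_iff_neBot]
    exact frequently_atTop.2 hJ
  have hmemJ : ∀ᶠ n in l, n ∈ J := by
    rw [hl, eventually_inf_principal]
    exact Eventually.of_forall fun n hn => hn
  have hgeN : ∀ N : ℕ, ∀ᶠ n in l, N ≤ n ∧ n ∈ J := fun N =>
    ((eventually_ge_atTop N).filter_mono inf_le_left).and hmemJ
  -- Step 1: convergence on each measurable set
  have step1 : ∀ A : Set U, MeasurableSet A →
      ∃ c : ℝ≥0∞, c ≠ ⊤ ∧ Tendsto (fun n => ρ n A) l (𝓝 c) := by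
    intro A hA
    set u : ℕ → ℝ≥0∞ := fun n => ρ n A with hu
    set c : ℝ≥0∞ := liminf u l with hc
    have hclose : ∀ ε : ℝ≥0∞, ε ≠ 0 → ∀ᶠ n in l, u n ≤ c + ε ∧ c ≤ u n + ε := by
      intro ε hε
      set δ : ℝ≥0∞ := ε / 2 with hδ
      have hδ0 : δ ≠ 0 := by
        simp [hδ, ENNReal.div_eq_zero_iff, hε]
      obtain ⟨N, hN⟩ := hcauchy δ hδ0
      obtain ⟨n0, hn0ge, hn0J⟩ := hJ N
      have hev : ∀ᶠ n in l, u n ≤ u n0 + δ ∧ u n0 ≤ u n + δ := by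
        refine (hgeN N).mono fun n hn => ?_
        have htv1 : tvDist (ρ n) (ρ n0) ≤ δ := hN n hn.2 n0 hn0J hn.1 hn0ge
        have htv2 : tvDist (ρ n0) (ρ n) ≤ δ := hN n0 hn0J n hn.2 hn0ge hn.1
        constructor
        · exact le_trans (apply_le_add_tvDist (ρ n) (ρ n0) hA) (add_le_add_right htv1 _)
        · exact le_trans (apply_le_add_tvDist (ρ n0) (ρ n) hA) (add_le_add_right htv2 _)
      have hc1 : c ≤ u n0 + δ :=
        liminf_le_of_frequently_le ((hev.mono fun n hn => hn.1).frequently)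
      have hc2 : u n0 - δ ≤ c :=
        le_liminf_of_le (by isBoundedDefault)
          (hev.mono fun n hn => tsub_le_iff_right.2 hn.2)
      have hc2' : u n0 ≤ c + δ := tsub_le_iff_right.1 hc2
      refine hev.mono fun n hn => ⟨?_, ?_⟩
      · calc u n ≤ u n0 + δ := hn.1
          _ ≤ (c + δ) + δ := add_le_add_left hc2' _
          _ = c + ε := by rw [add_assoc, hδ, ENNReal.add_halves]
      · calc c ≤ u n0 + δ := hc1
          _ ≤ (u n + δ) + δ := add_le_add_left hn.2 _
          _ = u n + ε := by rw [add_assoc, hδ, ENNReal.add_halves]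
    have hcfin : c ≠ ⊤ := by
      obtain ⟨n, hn⟩ := (hclose 1 one_ne_zero).exists
      exact ne_top_of_le_ne_top (by simp [hu, measure_ne_top]) hn.2
    exact ⟨c, hcfin, tendsto_of_eventually_close hcfin hclose⟩
  -- the limit function
  set g : Set U → ℝ≥0∞ := fun A => limsup (J.indicator (fun n => ρ n A)) atTop with hg
  have hgt : ∀ A : Set U, MeasurableSet A → Tendsto (fun n => ρ n A) l (𝓝 (g A)) := by
    intro A hA
    obtain ⟨c, hcfin, hct⟩ := step1 A hA
    have : g A = c := limsup_indicator_eq hJ hcfin hct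
    rw [this]; exact hct
  -- additivity
  have hempty : g ∅ = 0 := by
    have : (J.indicator (fun n => ρ n (∅ : Set U))) = fun _ => 0 := by
      funext n; simp
    rw [hg]; simp only [this]
    exact limsup_const 0
  have hadd : ∀ f : ℕ → Set U, (∀ i, MeasurableSet (f i)) → Pairwise (Function.onFun Disjoint f) →
      g (⋃ i, f i) = ∑' i, g (f i) := by
    intro f hfm hfd
    have htU : Tendsto (fun n => ρ n (⋃ i, f i)) l (𝓝 (g (⋃ i, f i))) :=
      hgt _ (MeasurableSet.iUnion hfm)
    have hsum : ∀ K : ℕ, Tendsto (fun n => ∑ i ∈ Finset.range K, ρ n (f i)) l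
        (𝓝 (∑ i ∈ Finset.range K, g (f i))) := fun K =>
      tendsto_finset_sum _ fun i _ => hgt _ (hfm i)
    have hbi : ∀ (n : ℕ) (K : ℕ),
        ρ n (⋃ i ∈ Finset.range K, f i) = ∑ i ∈ Finset.range K, ρ n (f i) := by
      intro n K
      exact measure_biUnion_finset (hfd.set_pairwise _) fun i _ => hfm i
    refine le_antisymm ?_ ?_
    · -- g U ≤ ∑'
      refine ENNReal.le_of_forall_pos_le_add fun ε hε hlt => ?_
      set δ : ℝ≥0∞ := (ε : ℝ≥0∞) / 2 with hδ
      have hε0 : (ε : ℝ≥0∞) ≠ 0 := by exact_mod_cast hε.ne'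
      have hδ0 : δ ≠ 0 := by simp [hδ, ENNReal.div_eq_zero_iff, hε0]
      have hδpos : 0 < δ := pos_iff_ne_zero.2 hδ0
      obtain ⟨N, hN⟩ := hcauchy δ hδ0
      obtain ⟨n0, hn0ge, hn0J⟩ := hJ N
      have htot : ∑' i, ρ n0 (f i) ≠ ⊤ := by
        rw [← measure_iUnion hfd hfm]; exact measure_ne_top _ _
      obtain ⟨K, hK⟩ := ((ENNReal.tendsto_sum_nat_add (fun i => ρ n0 (f i))
        htot).eventually_lt_const hδpos).exists
      have hshift : Pairwise (Function.onFun Disjoint fun i => f (i + K)) := fun i j hij =>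
        hfd (by omega)
      have hT : ρ n0 (⋃ i, f (i + K)) ≤ δ := by
        rw [measure_iUnion hshift fun i => hfm _]
        exact hK.le
      have hev : ∀ᶠ n in l,
          ρ n (⋃ i, f i) ≤ (∑ i ∈ Finset.range K, ρ n (f i)) + ε := by
        refine (hgeN N).mono fun n hn => ?_
        have hsub : (⋃ i, f i) ⊆ (⋃ i ∈ Finset.range K, f i) ∪ ⋃ i, f (i + K) := by
          rintro x ⟨s, ⟨i, rfl⟩, hx⟩
          rcases lt_or_ge i K with hiK | hiK
          · exact Or.inl (Set.mem_biUnion (Finset.mem_range.2 hiK) hx)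
          · exact Or.inr ⟨_, ⟨i - K, rfl⟩, by simpa [Nat.sub_add_cancel hiK] using hx⟩
        have h1 : ρ n (⋃ i, f i) ≤
            ρ n (⋃ i ∈ Finset.range K, f i) + ρ n (⋃ i, f (i + K)) :=
          (measure_mono hsub).trans (measure_union_le _ _)
        have h2 : ρ n (⋃ i, f (i + K)) ≤ δ + δ := by
          calc ρ n (⋃ i, f (i + K))
              ≤ ρ n0 (⋃ i, f (i + K)) + tvDist (ρ n) (ρ n0) :=
                apply_le_add_tvDist _ _ (MeasurableSet.iUnion fun i => hfm _)
            _ ≤ δ + δ := add_le_add hT (hN n hn.2 n0 hn0J hn.1 hn0ge)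
        calc ρ n (⋃ i, f i) ≤ ρ n (⋃ i ∈ Finset.range K, f i) + (δ + δ) :=
              h1.trans (add_le_add_right h2 _)
          _ = (∑ i ∈ Finset.range K, ρ n (f i)) + ε := by
              rw [hbi n K, hδ, ENNReal.add_halves]
      have := le_of_tendsto_of_tendsto htU ((hsum K).add tendsto_const_nhds) hev
      exact this.trans (add_le_add_left (ENNReal.sum_le_tsum _) _)
    · -- ∑' ≤ g U
      rw [ENNReal.tsum_eq_iSup_nat]
      refine iSup_le fun K => ?_
      refine le_of_tendsto_of_tendsto (hsum K) htU ?_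
      filter_upwards with n
      rw [← hbi n K]
      exact measure_mono (Set.iUnion₂_subset fun i _ => Set.subset_iUnion f i)
  refine ⟨Measure.ofMeasurable (fun A _ => g A) hempty hadd, fun A hA => ?_, fun A hA => ?_⟩
  · exact Measure.ofMeasurable_apply A hA
  · rw [Measure.ofMeasurable_apply A hA]
    exact hgt A hA

end TVAux
/-- Patching lemma for kernels: if bounded kernels `μ_n` from `S × ℝ` to `U` are TV-continuous on
`S × G_n` and approximate `μ` up to `h_n → 0` (uniformly on bounded sets) outside `ν`-null sets,
then `μ` agrees `ν`-a.e. with a bounded kernel `μ′` that is TV-continuous on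
`S × limsup_n G_n`. -/
theorem stmt_17 {S U : Type*} [MetricSpace S] [CompleteSpace S] [SecondCountableTopology S]
    [MeasurableSpace S] [BorelSpace S] [MeasurableSpace U] [StandardBorelSpace U]
    (ν : Kernel ℝ S)
    (hν : ∀ x : ℝ, ∀ G : Set S, IsOpen G → G.Nonempty → 0 < ν x G)
    (μ : Kernel (S × ℝ) U) [IsFiniteKernel μ]
    (μs : ℕ → Kernel (S × ℝ) U) [hμs : ∀ n, IsFiniteKernel (μs n)]
    (G : ℕ → Set ℝ) (hG : ∀ n, IsOpen (G n))
    (hcont : ∀ n, ∀ p ∈ Set.univ ×ˢ G n,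
      Tendsto (fun q => tvDist (μs n q) (μs n p)) (nhdsWithin p (Set.univ ×ˢ G n)) (nhds 0))
    (h : ℕ → S × ℝ → ℝ) (hmeas : ∀ n, Measurable (h n)) (hpos : ∀ n q, 0 ≤ h n q)
    (hto0 : ∀ B : Set (S × ℝ), Bornology.IsBounded B →
      TendstoUniformlyOn h (fun _ => 0) atTop B)
    (hnull : ∀ (n : ℕ) (x : ℝ),
      ν x {s : S | ENNReal.ofReal (h n (s, x)) < tvDist (μ (s, x)) (μs n (s, x))} = 0) :
    ∃ μ' : Kernel (S × ℝ) U, IsFiniteKernel μ' ∧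
      (∀ x : ℝ, ν x {s : S | μ (s, x) ≠ μ' (s, x)} = 0) ∧
      ∀ p ∈ Set.univ ×ˢ (⋂ n, ⋃ k, ⋃ _ : n ≤ k, G k),
        Tendsto (fun q => tvDist (μ' q) (μ' p))
          (nhdsWithin p (Set.univ ×ˢ (⋂ n, ⋃ k, ⋃ _ : n ≤ k, G k))) (nhds 0) := by
  classical
  set T' : Set ℝ := ⋂ n, ⋃ k, ⋃ _ : n ≤ k, G k with hT'def
  have hT'mem : ∀ x ∈ T', ∀ N : ℕ, ∃ k ≥ N, x ∈ G k := by
    intro x hx N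
    rw [hT'def, Set.mem_iInter] at hx
    have := hx N
    simpa [Set.mem_iUnion] using this
  -- density of the good sets
  have hdense : ∀ (n m : ℕ) (x : ℝ), Dense {s : S |
      tvDist (μ (s,x)) (μs n (s,x)) ≤ ENNReal.ofReal (h n (s,x)) ∧
      tvDist (μ (s,x)) (μs m (s,x)) ≤ ENNReal.ofReal (h m (s,x))} := by
    intro n m x
    set D := {s : S |
      tvDist (μ (s,x)) (μs n (s,x)) ≤ ENNReal.ofReal (h n (s,x)) ∧
      tvDist (μ (s,x)) (μs m (s,x)) ≤ ENNReal.ofReal (h m (s,x))} with hD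
    refine dense_iff_inter_open.2 fun o ho hone => ?_
    by_contra hcon
    rw [Set.not_nonempty_iff_eq_empty] at hcon
    have hsub : o ⊆ Dᶜ := by
      intro y hy
      intro hyD
      exact Set.eq_empty_iff_forall_notMem.1 hcon y ⟨hy, hyD⟩
    have hDc : ν x Dᶜ = 0 := by
      have hsub2 : Dᶜ ⊆
          {s : S | ENNReal.ofReal (h n (s, x)) < tvDist (μ (s, x)) (μs n (s, x))} ∪
          {s : S | ENNReal.ofReal (h m (s, x)) < tvDist (μ (s, x)) (μs m (s, x))} := by
        intro y hy
        rw [hD, Set.mem_compl_iff, Set.mem_setOf_eq, not_and_or] at hy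
        rcases hy with hy | hy
        · exact Or.inl (not_le.1 hy)
        · exact Or.inr (not_le.1 hy)
      refine le_antisymm ?_ zero_le
      calc ν x Dᶜ ≤ _ := measure_mono hsub2
        _ ≤ _ + _ := measure_union_le _ _
        _ = 0 := by rw [hnull n x, hnull m x, add_zero]
    have h1 : ν x o ≤ 0 := hDc ▸ measure_mono hsub
    exact absurd (lt_of_lt_of_le (hν x o ho hone) h1) (lt_irrefl 0)
  -- continuity of μs n at interior points, as full nhds convergence
  have hcontN : ∀ (n : ℕ) (p : S × ℝ), p.2 ∈ G n →
      Tendsto (fun q => tvDist (μs n q) (μs n p)) (𝓝 p) (𝓝 0) := by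
    intro n p hp
    have hnb : Set.univ ×ˢ G n ∈ 𝓝 p := (isOpen_univ.prod (hG n)).mem_nhds ⟨trivial, hp⟩
    have := hcont n p ⟨trivial, hp⟩
    rwa [nhdsWithin_eq_nhds.2 hnb] at this
  -- approximation by a good nearby point
  have happrox : ∀ (x : ℝ) (s : S) (n m : ℕ), x ∈ G n → x ∈ G m → ∀ ε : ℝ≥0∞, ε ≠ 0 →
      ∃ s' : S, dist s' s < 1 ∧
        tvDist (μ (s',x)) (μs n (s',x)) ≤ ENNReal.ofReal (h n (s',x)) ∧
        tvDist (μ (s',x)) (μs m (s',x)) ≤ ENNReal.ofReal (h m (s',x)) ∧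
        tvDist (μs n (s',x)) (μs n (s,x)) ≤ ε ∧
        tvDist (μs m (s',x)) (μs m (s,x)) ≤ ε := by
    intro x s n m hxn hxm ε hε
    have hcn := hcontN n (s, x) hxn
    have hcm := hcontN m (s, x) hxm
    have hεpos : (0:ℝ≥0∞) < ε := pos_iff_ne_zero.2 hε
    have hev : ∀ᶠ q in 𝓝 (s, x), tvDist (μs n q) (μs n (s,x)) < ε ∧
        tvDist (μs m q) (μs m (s,x)) < ε :=
      (hcn.eventually_lt_const hεpos).and (hcm.eventually_lt_const hεpos)
    have hmap : Tendsto (fun s' : S => (s', x)) (𝓝 s) (𝓝 (s, x)) :=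
      (continuous_id.prodMk continuous_const).tendsto s
    have hev' : ∀ᶠ s' in 𝓝 s, (tvDist (μs n (s',x)) (μs n (s,x)) < ε ∧
        tvDist (μs m (s',x)) (μs m (s,x)) < ε) ∧ dist s' s < 1 :=
      (hmap.eventually hev).and
        (eventually_of_mem (Metric.ball_mem_nhds s one_pos) fun _ hy => hy)
    obtain ⟨t, htnhds, htsub⟩ := hev'.exists_mem
    obtain ⟨s', hs't, hs'D⟩ := mem_closure_iff_nhds.1 ((hdense n m x) s) t htnhds
    exact ⟨s', (htsub s' hs't).2, hs'D.1, hs'D.2, (htsub s' hs't).1.1.le, (htsub s' hs't).1.2.le⟩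
  -- key Cauchy estimate
  have hkey : ∀ (x : ℝ) (s : S) (n m : ℕ), x ∈ G n → x ∈ G m → ∀ c : ℝ≥0∞,
      (∀ s' : S, dist s' s < 1 →
        ENNReal.ofReal (h n (s', x)) ≤ c ∧ ENNReal.ofReal (h m (s', x)) ≤ c) →
      tvDist (μs n (s,x)) (μs m (s,x)) ≤ 2 * c := by
    intro x s n m hxn hxm c hc
    refine ENNReal.le_of_forall_pos_le_add fun ε hε _ => ?_
    have hε0 : ((ε:ℝ≥0∞) / 2) ≠ 0 := by
      simp [ENNReal.div_eq_zero_iff]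
      exact_mod_cast hε.ne'
    obtain ⟨s', hd, hgn, hgm, htn, htm⟩ := happrox x s n m hxn hxm ((ε:ℝ≥0∞)/2) hε0
    have hb1 : tvDist (μs n (s,x)) (μs n (s',x)) ≤ (ε:ℝ≥0∞)/2 :=
      (TVAux.tvDist_comm _ _).le.trans htn
    have hb2 : tvDist (μs n (s',x)) (μ (s',x)) ≤ c :=
      ((TVAux.tvDist_comm _ _).le.trans hgn).trans (hc s' hd).1
    have hb3 : tvDist (μ (s',x)) (μs m (s',x)) ≤ c := hgm.trans (hc s' hd).2
    calc tvDist (μs n (s,x)) (μs m (s,x))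
        ≤ tvDist (μs n (s,x)) (μs n (s',x)) + tvDist (μs n (s',x)) (μs m (s,x)) :=
          TVAux.tvDist_triangle _ _ _
      _ ≤ tvDist (μs n (s,x)) (μs n (s',x)) +
          (tvDist (μs n (s',x)) (μ (s',x)) + (tvDist (μ (s',x)) (μs m (s',x)) +
            tvDist (μs m (s',x)) (μs m (s,x)))) := by
          refine add_le_add_right ?_ _
          calc tvDist (μs n (s',x)) (μs m (s,x))
              ≤ tvDist (μs n (s',x)) (μ (s',x)) + tvDist (μ (s',x)) (μs m (s,x)) :=
                TVAux.tvDist_triangle _ _ _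
            _ ≤ tvDist (μs n (s',x)) (μ (s',x)) + (tvDist (μ (s',x)) (μs m (s',x)) +
                tvDist (μs m (s',x)) (μs m (s,x))) :=
                add_le_add_right (TVAux.tvDist_triangle _ _ _) _
      _ ≤ (ε:ℝ≥0∞)/2 + (c + (c + (ε:ℝ≥0∞)/2)) :=
          add_le_add hb1 (add_le_add hb2 (add_le_add hb3 htm))
      _ = 2 * c + ε := by
          rw [two_mul]
          calc (ε:ℝ≥0∞)/2 + (c + (c + (ε:ℝ≥0∞)/2))
              = (c + c) + ((ε:ℝ≥0∞)/2 + (ε:ℝ≥0∞)/2) := by ring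
            _ = (c + c) + ε := by rw [ENNReal.add_halves]
  -- uniform smallness of h on balls
  have hHbound : ∀ (q : S × ℝ) (δ : ℝ≥0∞), δ ≠ 0 → ∃ N : ℕ, ∀ n ≥ N, ∀ q' : S × ℝ,
      dist q' q < 2 → ENNReal.ofReal (h n q') ≤ δ := by
    intro q δ hδ
    have hB : Bornology.IsBounded (Metric.ball q 2) := Metric.isBounded_ball
    set r : ℝ := if δ = ⊤ then 1 else δ.toReal with hr
    have hrpos : 0 < r := by
      rw [hr]
      split_ifs with hδtop
      · exact one_pos
      · exact ENNReal.toReal_pos hδ hδtop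
    have hofr : ENNReal.ofReal r ≤ δ := by
      rw [hr]
      split_ifs with hδtop
      · simp [hδtop]
      · rw [ENNReal.ofReal_toReal hδtop]
    have := (Metric.tendstoUniformlyOn_iff.1 (hto0 _ hB)) r hrpos
    rw [eventually_atTop] at this
    obtain ⟨N, hN⟩ := this
    refine ⟨N, fun n hn q' hq' => ?_⟩
    have hq'B : q' ∈ Metric.ball q 2 := Metric.mem_ball.2 hq'
    have := hN n hn q' hq'B
    rw [Real.dist_eq] at this
    have hlt : h n q' < r := by
      have : |0 - h n q'| < r := this
      rw [zero_sub, abs_neg, abs_of_nonneg (hpos n q')] at this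
      exact this
    exact (ENNReal.ofReal_le_ofReal hlt.le).trans hofr
  -- Cauchy property at every point over the limsup set
  have hcauchyQ : ∀ q : S × ℝ, q.2 ∈ T' → ∀ ε : ℝ≥0∞, ε ≠ 0 →
      ∃ N, ∀ m ∈ {n : ℕ | q.2 ∈ G n}, ∀ n ∈ {n : ℕ | q.2 ∈ G n}, N ≤ m → N ≤ n →
        tvDist (μs m q) (μs n q) ≤ ε := by
    intro q hq ε hε
    have hε2 : ((ε:ℝ≥0∞) / 2) ≠ 0 := by simp [ENNReal.div_eq_zero_iff, hε]
    obtain ⟨N, hN⟩ := hHbound q (ε/2) hε2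
    refine ⟨N, fun m hm n hn hNm hNn => ?_⟩
    have hball : ∀ s' : S, dist s' q.1 < 1 →
        ENNReal.ofReal (h m (s', q.2)) ≤ ε/2 ∧ ENNReal.ofReal (h n (s', q.2)) ≤ ε/2 := by
      intro s' hds'
      have hdq : dist ((s', q.2) : S × ℝ) q < 2 := by
        rw [Prod.dist_eq]
        simp only [dist_self]
        calc max (dist s' q.1) 0 ≤ dist s' q.1 ⊔ 0 := le_rfl
          _ < 2 := by
            rw [sup_lt_iff]
            exact ⟨hds'.trans one_lt_two, two_pos⟩
      exact ⟨hN m hNm _ hdq, hN n hNn _ hdq⟩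
    have := hkey q.2 q.1 m n hm hn (ε/2) hball
    have hq12 : ((q.1, q.2) : S × ℝ) = q := rfl
    rw [hq12] at this
    calc tvDist (μs m q) (μs n q) ≤ 2 * (ε/2) := this
      _ ≤ ε := by
        rw [two_mul, ENNReal.add_halves]
  have hJq : ∀ q : S × ℝ, q.2 ∈ T' → ∀ a : ℕ, ∃ b ≥ a, b ∈ {n : ℕ | q.2 ∈ G n} :=
    fun q hq a => hT'mem q.2 hq a
  have hNBq : ∀ q : S × ℝ, q.2 ∈ T' → (atTop ⊓ 𝓟 {n : ℕ | q.2 ∈ G n}).NeBot := by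
    intro q hq
    rw [← frequently_mem_iff_neBot]
    exact frequently_atTop.2 (hJq q hq)
  -- the limit measures
  have hex : ∀ q : S × ℝ, q.2 ∈ T' → ∃ L : Measure U,
      (∀ A : Set U, MeasurableSet A →
        L A = limsup (Set.indicator {n : ℕ | q.2 ∈ G n} (fun n => μs n q A)) atTop) ∧
      (∀ A : Set U, MeasurableSet A →
        Tendsto (fun n => μs n q A) (atTop ⊓ 𝓟 {n : ℕ | q.2 ∈ G n}) (𝓝 (L A))) :=
    fun q hq => TVAux.exists_limit_measure (fun n => μs n q) _ (hJq q hq) (hcauchyQ q hq)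
  set μf : S × ℝ → Measure U :=
    fun q => if hq : q.2 ∈ T' then (hex q hq).choose else μ q with hμfdef
  have hμfT : ∀ (q : S × ℝ) (hq : q.2 ∈ T'),
      (∀ A : Set U, MeasurableSet A →
        μf q A = limsup (Set.indicator {n : ℕ | q.2 ∈ G n} (fun n => μs n q A)) atTop) ∧
      (∀ A : Set U, MeasurableSet A →
        Tendsto (fun n => μs n q A) (atTop ⊓ 𝓟 {n : ℕ | q.2 ∈ G n}) (𝓝 (μf q A))) := by
    intro q hq
    have : μf q = (hex q hq).choose := by rw [hμfdef]; exact dif_pos hq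
    rw [this]
    exact (hex q hq).choose_spec
  have hμfN : ∀ q : S × ℝ, q.2 ∉ T' → μf q = μ q := by
    intro q hq
    rw [hμfdef]
    exact dif_neg hq
  -- uniform bound
  have hbound : ∀ q : S × ℝ, μf q Set.univ ≤ Kernel.bound μ + 3 := by
    intro q
    by_cases hq : q.2 ∈ T'
    · haveI := hNBq q hq
      obtain ⟨N, hN⟩ := hHbound q 1 one_ne_zero
      have ht := (hμfT q hq).2 Set.univ MeasurableSet.univ
      refine le_of_tendsto ht ?_
      have hev : ∀ᶠ n in atTop ⊓ 𝓟 {n : ℕ | q.2 ∈ G n}, N ≤ n ∧ q.2 ∈ G n := by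
        refine (((eventually_ge_atTop N).filter_mono inf_le_left)).and ?_
        rw [eventually_inf_principal]
        exact Eventually.of_forall fun n hn => hn
      refine hev.mono fun n hn => ?_
      obtain ⟨s', hd, hgn, -, htn, -⟩ := happrox q.2 q.1 n n hn.2 hn.2 1 one_ne_zero
      have hd2 : dist ((s', q.2) : S × ℝ) q < 2 := by
        rw [Prod.dist_eq]
        simp only [dist_self]
        rw [sup_lt_iff]
        exact ⟨hd.trans one_lt_two, two_pos⟩
      have hb1 : μs n q Set.univ ≤ μs n (s', q.2) Set.univ + 1 := by
        refine (TVAux.apply_le_add_tvDist _ _ MeasurableSet.univ).trans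
          (add_le_add_right ?_ _)
        exact (TVAux.tvDist_comm _ _).le.trans htn
      have hb2 : μs n (s', q.2) Set.univ ≤ μ (s', q.2) Set.univ + 1 := by
        refine (TVAux.apply_le_add_tvDist _ _ MeasurableSet.univ).trans
          (add_le_add_right ?_ _)
        exact ((TVAux.tvDist_comm _ _).le.trans hgn).trans (hN n hn.1 _ hd2)
      calc μs n q Set.univ ≤ (μ (s', q.2) Set.univ + 1) + 1 :=
            hb1.trans (add_le_add_left hb2 _)
        _ ≤ (Kernel.bound μ + 1) + 1 :=
            add_le_add_left (add_le_add_left (Kernel.measure_le_bound μ _ _) _) _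
        _ ≤ Kernel.bound μ + 3 := by
            rw [add_assoc]
            refine add_le_add_right ?_ _
            norm_num
    · rw [hμfN q hq]
      exact (Kernel.measure_le_bound μ q Set.univ).trans le_self_add
  have hfinf : ∀ q : S × ℝ, IsFiniteMeasure (μf q) := by
    intro q
    refine ⟨(hbound q).trans_lt ?_⟩
    exact ENNReal.add_lt_top.2 ⟨Kernel.bound_lt_top μ, by norm_num⟩
  -- measurability
  have hT'meas : MeasurableSet T' := by
    rw [hT'def]
    exact MeasurableSet.iInter fun n => MeasurableSet.iUnion fun k =>
      MeasurableSet.iUnion fun _ => (hG k).measurableSet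
  have hmeasf : Measurable μf := by
    refine Measure.measurable_of_measurable_coe _ fun A hA => ?_
    have heq : (fun q => μf q A) = fun q : S × ℝ =>
        if q.2 ∈ T' then limsup (fun n => if q.2 ∈ G n then μs n q A else 0) atTop
        else μ q A := by
      funext q
      by_cases hq : q.2 ∈ T'
      · rw [if_pos hq, (hμfT q hq).1 A hA]
        congr 1
      · rw [if_neg hq, hμfN q hq]
    rw [heq]
    have hTm : MeasurableSet {q : S × ℝ | q.2 ∈ T'} := hT'meas.preimage measurable_snd
    refine Measurable.ite hTm ?_ (μ.measurable_coe hA)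
    refine Measurable.limsup fun n => ?_
    exact Measurable.ite ((hG n).measurableSet.preimage measurable_snd)
      ((μs n).measurable_coe hA) measurable_const
  refine ⟨⟨μf, hmeasf⟩, ?_, ?_, ?_⟩
  · exact ⟨⟨Kernel.bound μ + 3,
      ENNReal.add_lt_top.2 ⟨Kernel.bound_lt_top μ, by norm_num⟩, hbound⟩⟩
  · -- a.e. equality
    intro x
    by_cases hx : x ∈ T'
    · refine measure_mono_null ?_
        (measure_iUnion_null (s := fun n => {s : S |
          ENNReal.ofReal (h n (s, x)) < tvDist (μ (s, x)) (μs n (s, x))})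
          fun n => hnull n x)
      intro s hs
      by_contra hcon
      rw [Set.mem_iUnion] at hcon
      push_neg at hcon
      have hgood : ∀ n : ℕ, tvDist (μ (s, x)) (μs n (s, x)) ≤ ENNReal.ofReal (h n (s, x)) :=
        fun n => not_lt.1 fun hlt => hcon n hlt
      refine hs ?_
      have hq : ((s, x) : S × ℝ).2 ∈ T' := hx
      haveI := hNBq (s, x) hq
      refine Measure.ext fun A hA => ?_
      have ht1 := (hμfT (s, x) hq).2 A hA
      have ht2 : Tendsto (fun n => μs n (s, x) A) (atTop ⊓ 𝓟 {n : ℕ | x ∈ G n})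
          (𝓝 (μ (s, x) A)) := by
        refine TVAux.tendsto_of_eventually_close (measure_ne_top _ _) fun ε hε => ?_
        obtain ⟨N, hN⟩ := hHbound (s, x) ε hε
        refine ((eventually_ge_atTop N).filter_mono inf_le_left).mono fun n hn => ?_
        have hsmall : tvDist (μ (s, x)) (μs n (s, x)) ≤ ε :=
          (hgood n).trans (hN n hn (s, x) (by simp))
        constructor
        · refine (TVAux.apply_le_add_tvDist _ _ hA).trans (add_le_add_right ?_ _)
          exact (TVAux.tvDist_comm _ _).le.trans hsmall
        · exact (TVAux.apply_le_add_tvDist _ _ hA).trans (add_le_add_right hsmall _)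
      exact (tendsto_nhds_unique ht2 ht1)
    · have hempty : {s : S | μ (s, x) ≠ (⟨μf, hmeasf⟩ : Kernel (S × ℝ) U) (s, x)} = ∅ := by
        rw [Set.eq_empty_iff_forall_notMem]
        intro s hs
        exact hs (hμfN (s, x) hx).symm
      rw [hempty]
      exact measure_empty
  · -- continuity
    intro p hp
    have hx : p.2 ∈ T' := hp.2
    have hco : ∀ q : S × ℝ, (⟨μf, hmeasf⟩ : Kernel (S × ℝ) U) q = μf q := fun _ => rfl
    simp only [hco]
    rw [ENNReal.tendsto_nhds_zero]
    intro ε hε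
    set δ : ℝ≥0∞ := min (ε / 9) 1 with hδdef
    have hδ0 : δ ≠ 0 := by
      rw [hδdef]
      exact (lt_min (ENNReal.div_pos hε.ne' (by norm_num)) one_pos).ne'
    have hδpos : 0 < δ := pos_iff_ne_zero.2 hδ0
    have h9δ : (2*δ + 2*δ) + (δ + (2*δ + 2*δ)) ≤ ε := by
      have h1 : (2*δ + 2*δ) + (δ + (2*δ + 2*δ)) = 9 * δ := by ring
      rw [h1]
      calc 9 * δ ≤ 9 * (ε / 9) := mul_le_mul_right (min_le_left _ _) _
        _ ≤ ε := ENNReal.mul_div_le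
    obtain ⟨N, hN⟩ := hHbound p δ hδ0
    obtain ⟨n, hnN, hxn⟩ := hT'mem p.2 hx N
    -- main estimate
    have hC1 : ∀ q : S × ℝ, dist q p < 1 → q.2 ∈ T' → q.2 ∈ G n →
        tvDist (μf q) (μs n q) ≤ 2*δ + 2*δ := by
      intro q hdq hqT hqn
      haveI := hNBq q hqT
      haveI := hfinf q
      have hev : ∀ᶠ m in atTop ⊓ 𝓟 {k : ℕ | q.2 ∈ G k},
          tvDist (μs m q) (μs n q) ≤ 2*δ := by
        have hevJ : ∀ᶠ m in atTop ⊓ 𝓟 {k : ℕ | q.2 ∈ G k}, N ≤ m ∧ q.2 ∈ G m := by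
          refine ((eventually_ge_atTop N).filter_mono inf_le_left).and ?_
          rw [eventually_inf_principal]
          exact Eventually.of_forall fun m hm => hm
        refine hevJ.mono ?_
        intro m hm
        have hball : ∀ s' : S, dist s' q.1 < 1 →
            ENNReal.ofReal (h m (s', q.2)) ≤ δ ∧ ENNReal.ofReal (h n (s', q.2)) ≤ δ := by
          intro s' hds'
          have hd2 : dist ((s', q.2) : S × ℝ) p < 2 := by
            calc dist ((s', q.2) : S × ℝ) p ≤ dist ((s', q.2) : S × ℝ) q + dist q p :=
                  dist_triangle _ _ _
              _ < 1 + 1 := by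
                  refine add_lt_add ?_ hdq
                  rw [Prod.dist_eq]
                  simp only [dist_self]
                  rw [sup_lt_iff]
                  exact ⟨hds', one_pos⟩
              _ = 2 := by norm_num
          exact ⟨hN m hm.1 _ hd2, hN n hnN _ hd2⟩
        exact hkey q.2 q.1 m n hm.2 hqn δ hball
      refine TVAux.tvDist_le_of_forall_apply _ _ fun A hA => ?_
      have ht := (hμfT q hqT).2 A hA
      constructor
      · refine le_of_tendsto ht (hev.mono fun m hm => ?_)
        exact (TVAux.apply_le_add_tvDist _ _ hA).trans (add_le_add_right hm _)
      · refine ge_of_tendsto (ht.add (tendsto_const_nhds (x := 2*δ)))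
          (hev.mono fun m hm => ?_)
        refine (TVAux.apply_le_add_tvDist _ _ hA).trans (add_le_add_right ?_ _)
        exact (TVAux.tvDist_comm _ _).le.trans hm
    have hevd : ∀ᶠ q in nhdsWithin p (Set.univ ×ˢ T'), dist q p < 1 :=
      (eventually_of_mem (Metric.ball_mem_nhds p one_pos) fun _ hy => hy).filter_mono
        nhdsWithin_le_nhds
    have hevG : ∀ᶠ q in nhdsWithin p (Set.univ ×ˢ T'), q.2 ∈ G n :=
      (eventually_of_mem (((hG n).preimage continuous_snd).mem_nhds hxn)
        fun _ hy => hy).filter_mono nhdsWithin_le_nhds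
    have hevT : ∀ᶠ q in nhdsWithin p (Set.univ ×ˢ T'), q ∈ Set.univ ×ˢ T' :=
      eventually_mem_nhdsWithin
    have hevc : ∀ᶠ q in nhdsWithin p (Set.univ ×ˢ T'),
        tvDist (μs n q) (μs n p) ≤ δ :=
      (((hcontN n p hxn).eventually_lt_const hδpos).mono fun q hq => hq.le).filter_mono
        nhdsWithin_le_nhds
    filter_upwards [hevd, hevG, hevT, hevc] with q h1 h2 h3 h4
    have hqT : q.2 ∈ T' := h3.2
    haveI := hfinf q
    haveI := hfinf p
    have hb1 : tvDist (μf q) (μs n q) ≤ 2*δ + 2*δ := hC1 q h1 hqT h2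
    have hb3 : tvDist (μs n p) (μf p) ≤ 2*δ + 2*δ := by
      refine (TVAux.tvDist_comm _ _).le.trans ?_
      exact hC1 p (by simp [dist_self]) hx hxn
    calc tvDist (μf q) (μf p)
        ≤ tvDist (μf q) (μs n q) + tvDist (μs n q) (μf p) := TVAux.tvDist_triangle _ _ _
      _ ≤ tvDist (μf q) (μs n q) +
          (tvDist (μs n q) (μs n p) + tvDist (μs n p) (μf p)) :=
          add_le_add_right (TVAux.tvDist_triangle _ _ _) _
      _ ≤ (2*δ + 2*δ) + (δ + (2*δ + 2*δ)) := add_le_add hb1 (add_le_add h4 hb3)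
      _ ≤ ε := h9δ
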